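/- Let R ⊆ ℝ² be a nonempty compact convex set and let r^max = (max_{r ∈ R} r_1, max_{r ∈ R} r_2). If v ∈ R is not Pareto optimal in R, i.e., there exists p ∈ R with p ≻ v, then there exists ε ∈ (0, 1] such that (1 − ε)v + ε·r^max ∈ R. -/

import Mathlib

namespace SPIs

/-- `Pareto x y` means `y` is a weak Pareto improvement on `x`, i.e. `y ⪰ x`. -/
def Pareto {n : ℕ} (x y : Fin n → ℝ) : Prop := ∀ i, x i ≤ y i

/-- `StrictPareto x y` means `y` is a strict Pareto improvement on `x`, i.e. `y ≻ x`. -/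
def StrictPareto {n : ℕ} (x y : Fin n → ℝ) : Prop := Pareto x y ∧ ∃ i, x i < y i

/-- Auxiliary step: if `rmax - v` is a nonnegative combination of `x - v` and `y - v`
with `v, x, y ∈ R`, then some positive step towards `rmax` stays in `R`. -/
lemma step_aux (R : Set (Fin 2 → ℝ)) (hconv : Convex ℝ R)
    (v x y rmax : Fin 2 → ℝ) (hv : v ∈ R) (hx : x ∈ R) (hy : y ∈ R)
    (c1 c2 : ℝ) (hc1 : 0 ≤ c1) (hc2 : 0 ≤ c2)
    (heq : ∀ i, rmax i - v i = c1 * (x i - v i) + c2 * (y i - v i)) :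
    ∃ ε : ℝ, 0 < ε ∧ ε ≤ 1 ∧ (1 - ε) • v + ε • rmax ∈ R := by
  rcases eq_or_lt_of_le (add_nonneg hc1 hc2) with hs | hs
  · have hc1' : c1 = 0 := by linarith
    have hc2' : c2 = 0 := by linarith
    have hrv : rmax = v := by
      funext i
      have := heq i
      rw [hc1', hc2'] at this
      linarith
    refine ⟨1, one_pos, le_refl 1, ?_⟩
    have : (1 - (1:ℝ)) • v + (1:ℝ) • rmax = v := by
      funext i; simp [hrv]
    rw [this]; exact hv
  · set s := c1 + c2 with hs_def
    have hs1 : (0:ℝ) < 1 + s := by linarith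
    refine ⟨1/(1+s), by positivity, by rw [div_le_one hs1]; linarith, ?_⟩
    have hz : (c1/s) • x + (c2/s) • y ∈ R := by
      apply hconv hx hy (by positivity) (by positivity)
      field_simp
      exact hs_def.symm
    have hco1 : (0:ℝ) ≤ 1 - (1/(1+s)) * s := by
      have : (1/(1+s)) * s = s/(1+s) := by ring
      rw [this, sub_nonneg, div_le_one hs1]; linarith
    have hco2 : (0:ℝ) ≤ (1/(1+s)) * s := by positivity
    have key : (1 - 1/(1+s)) • v + (1/(1+s)) • rmax
        = (1 - (1/(1+s))*s) • v + ((1/(1+s))*s) • ((c1/s) • x + (c2/s) • y) := by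
      funext i
      have h := heq i
      simp only [Pi.add_apply, Pi.smul_apply, smul_eq_mul]
      have hsne : s ≠ 0 := ne_of_gt hs
      have hrm : rmax i = v i + c1 * (x i - v i) + c2 * (y i - v i) := by linarith
      rw [hrm]
      field_simp
      ring
    rw [key]
    exact hconv hv hz hco1 hco2 (by ring)

/-- in a nonempty compact convex `R ⊆ ℝ²`, any point `v ∈ R` that is not
Pareto optimal in `R` can be moved a positive fraction of the way towards
`r^max = (max_{r ∈ R} r_1, max_{r ∈ R} r_2)` while staying in `R`. -/
theorem move_towards_rmax (R : Set (Fin 2 → ℝ)) (hne : R.Nonempty)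
    (hcomp : IsCompact R) (hconv : Convex ℝ R)
    (rmax : Fin 2 → ℝ)
    (hrmax : ∀ i, IsGreatest ((fun r => r i) '' R) (rmax i))
    (v : Fin 2 → ℝ) (hv : v ∈ R)
    (p : Fin 2 → ℝ) (hp : p ∈ R) (hpv : StrictPareto v p) :
    ∃ ε : ℝ, 0 < ε ∧ ε ≤ 1 ∧ (1 - ε) • v + ε • rmax ∈ R := by
  -- basic bounds
  have hub : ∀ z ∈ R, ∀ i, z i ≤ rmax i := fun z hz i => (hrmax i).2 ⟨z, hz, rfl⟩
  have hvle : ∀ i, v i ≤ rmax i := hub v hv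
  have hq : ∀ i, v i ≤ p i := hpv.1
  obtain ⟨a, haR, ha0⟩ := (hrmax 0).1
  obtain ⟨b, hbR, hb1⟩ := (hrmax 1).1
  have ha0' : a 0 = rmax 0 := ha0
  have hb1' : b 1 = rmax 1 := hb1
  have ha1 : a 1 ≤ rmax 1 := hub a haR 1
  have hb0 : b 0 ≤ rmax 0 := hub b hbR 0
  have hp0 : p 0 ≤ rmax 0 := hub p hp 0
  have hp1 : p 1 ≤ rmax 1 := hub p hp 1
  have hex : v 0 < p 0 ∨ v 1 < p 1 := Fin.exists_fin_two.mp hpv.2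
  by_cases h0 : rmax 0 = v 0
  · -- v already maximal in coordinate 0; then p 0 = v 0, so p 1 > v 1
    have hpe0 : p 0 = v 0 := le_antisymm (h0 ▸ hp0) (hq 0)
    have hps : v 1 < p 1 := by
      rcases hex with h | h
      · rw [hpe0] at h; exact absurd h (lt_irrefl _)
      · exact h
    apply step_aux R hconv v p p rmax hv hp hp ((rmax 1 - v 1)/(p 1 - v 1)) 0
      (div_nonneg (by linarith [hvle 1]) (by linarith)) le_rfl
    rw [Fin.forall_fin_two]
    refine ⟨?_, ?_⟩
    · rw [h0, hpe0]; ring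
    · rw [div_mul_cancel₀ _ (by linarith : p 1 - v 1 ≠ 0)]; ring
  by_cases h1 : rmax 1 = v 1
  · have hpe1 : p 1 = v 1 := le_antisymm (h1 ▸ hp1) (hq 1)
    have hps : v 0 < p 0 := by
      rcases hex with h | h
      · exact h
      · rw [hpe1] at h; exact absurd h (lt_irrefl _)
    apply step_aux R hconv v p p rmax hv hp hp ((rmax 0 - v 0)/(p 0 - v 0)) 0
      (div_nonneg (by linarith [hvle 0]) (by linarith)) le_rfl
    rw [Fin.forall_fin_two]
    refine ⟨?_, ?_⟩
    · rw [div_mul_cancel₀ _ (by linarith : p 0 - v 0 ≠ 0)]; ring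
    · rw [h1, hpe1]; ring
  -- now both gaps are positive
  have hd0 : 0 < rmax 0 - v 0 := lt_of_le_of_ne (by linarith [hvle 0]) (by intro h; exact h0 (by linarith))
  have hd1 : 0 < rmax 1 - v 1 := lt_of_le_of_ne (by linarith [hvle 1]) (by intro h; exact h1 (by linarith))
  by_cases hq1 : p 1 = v 1
  · -- p improves only coordinate 0: use p and b
    have hps : v 0 < p 0 := by
      rcases hex with h | h
      · exact h
      · rw [hq1] at h; exact absurd h (lt_irrefl _)
    apply step_aux R hconv v p b rmax hv hp hbR ((rmax 0 - b 0)/(p 0 - v 0)) 1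
      (div_nonneg (by linarith) (by linarith)) zero_le_one
    rw [Fin.forall_fin_two]
    refine ⟨?_, ?_⟩
    · rw [div_mul_cancel₀ _ (by linarith : p 0 - v 0 ≠ 0)]; ring
    · rw [hq1, hb1']; ring
  by_cases hq0 : p 0 = v 0
  · -- p improves only coordinate 1: use p and a
    have hps : v 1 < p 1 := by
      rcases hex with h | h
      · rw [hq0] at h; exact absurd h (lt_irrefl _)
      · exact h
    apply step_aux R hconv v p a rmax hv hp haR ((rmax 1 - a 1)/(p 1 - v 1)) 1
      (div_nonneg (by linarith) (by linarith)) zero_le_one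
    rw [Fin.forall_fin_two]
    refine ⟨?_, ?_⟩
    · rw [hq0, ha0']; ring
    · rw [div_mul_cancel₀ _ (by linarith : p 1 - v 1 ≠ 0)]; ring
  -- both coordinates of p strictly improve on v
  have hps0 : v 0 < p 0 := lt_of_le_of_ne (hq 0) (fun h => hq0 h.symm)
  have hps1 : v 1 < p 1 := lt_of_le_of_ne (hq 1) (fun h => hq1 h.symm)
  rcases le_or_gt ((p 1 - v 1) * (rmax 0 - v 0)) ((p 0 - v 0) * (rmax 1 - v 1)) with hcr | hcr
  · -- direction lies between p - v and b - v
    by_cases hbmax : b 0 = rmax 0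
    · -- b = rmax ∈ R, take ε = 1
      have hb : b = rmax := by
        funext i
        fin_cases i
        exacts [hbmax, hb1']
      refine ⟨1, one_pos, le_refl 1, ?_⟩
      have heq1 : (1 - (1:ℝ)) • v + (1:ℝ) • rmax = rmax := by funext i; simp
      rw [heq1, ← hb]; exact hbR
    · have hbmax' : b 0 < rmax 0 := lt_of_le_of_ne hb0 hbmax
      set D := (p 0 - v 0) * (rmax 1 - v 1) - (p 1 - v 1) * (b 0 - v 0) with hD_def
      have hD : 0 < D := by nlinarith
      apply step_aux R hconv v p b rmax hv hp hbR
        ((rmax 1 - v 1) * (rmax 0 - b 0) / D)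
        (((p 0 - v 0) * (rmax 1 - v 1) - (p 1 - v 1) * (rmax 0 - v 0)) / D)
        (div_nonneg (by nlinarith) hD.le) (div_nonneg (by linarith) hD.le)
      rw [Fin.forall_fin_two]
      refine ⟨?_, ?_⟩
      · rw [div_mul_eq_mul_div, div_mul_eq_mul_div, ← add_div, eq_div_iff hD.ne',
          hD_def]
        ring
      · rw [hb1', div_mul_eq_mul_div, div_mul_eq_mul_div, ← add_div,
          eq_div_iff hD.ne', hD_def]
        ring
  · -- direction lies between a - v and p - v
    set D := (p 1 - v 1) * (rmax 0 - v 0) - (p 0 - v 0) * (a 1 - v 1) with hD_def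
    have hD : 0 < D := by nlinarith
    apply step_aux R hconv v p a rmax hv hp haR
      ((rmax 0 - v 0) * (rmax 1 - a 1) / D)
      (((p 1 - v 1) * (rmax 0 - v 0) - (p 0 - v 0) * (rmax 1 - v 1)) / D)
      (div_nonneg (by nlinarith) hD.le) (div_nonneg (by linarith) hD.le)
    rw [Fin.forall_fin_two]
    refine ⟨?_, ?_⟩
    · rw [ha0', div_mul_eq_mul_div, div_mul_eq_mul_div, ← add_div,
        eq_div_iff hD.ne', hD_def]
      ring
    · rw [div_mul_eq_mul_div, div_mul_eq_mul_div, ← add_div,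
        eq_div_iff hD.ne', hD_def]
      ring

end SPIs
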